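/- Let S be a finite set with |S| = κ ≥ 2, α > 1, and m a probability measure on S with maximum value M_⋆ attained on the set S_⋆ ⊆ S of cardinality κ_⋆. Set m_⋆(x) = m(x)/M_⋆ and Z_{N,S} = N^α Σ_{η ∈ E_N} m_⋆^η / a(η). Then Z_{N,S} converges, as N → ∞, to Z_S = κ_⋆ Γ(α)^{κ_⋆ - 1} Π_{y ∉ S_⋆} Γ_y, where Γ_y = Σ_{j≥0} m_⋆(y)^j / a(j) and Γ(α) = Σ_{j≥0} 1/a(j). -/

import Mathlib

open Filter Finset Topology

noncomputable def aZR (α : ℝ) (n : ℕ) : ℝ := if n = 0 then 1 else (n : ℝ) ^ α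

def confs (S : Type*) [Fintype S] [DecidableEq S] (N : ℕ) : Finset (S → ℕ) :=
  (Fintype.piFinset fun _ => Finset.range (N + 1)).filter (fun η => ∑ x, η x = N)

lemma aZR_pos (α : ℝ) (n : ℕ) : 0 < aZR α n := by
  unfold aZR
  split
  · norm_num
  · exact Real.rpow_pos_of_pos (by positivity) _

lemma summable_one_div_aZR {α : ℝ} (hα : 1 < α) : Summable (fun n => 1 / aZR α n) := by
  rw [← summable_nat_add_iff 1]
  have h : Summable (fun n : ℕ => 1 / ((n + 1 : ℕ) : ℝ) ^ α) :=
    (summable_nat_add_iff 1).2 (Real.summable_one_div_nat_rpow.2 hα)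
  refine h.congr fun n => ?_
  simp [aZR]

/-- the `Good` predicate: nonnegative, `n^α f n → c`, sums to `F`. -/
def Good (α : ℝ) (f : ℕ → ℝ) (c F : ℝ) : Prop :=
  (∀ n, 0 ≤ f n) ∧ Tendsto (fun n : ℕ => (n : ℝ) ^ α * f n) atTop (𝓝 c) ∧ HasSum f F

lemma good_delta {α : ℝ} (hα : 1 < α) :
    Good α (fun n => if n = 0 then (1:ℝ) else 0) 0 1 := by
  refine ⟨fun n => by positivity, ?_, hasSum_ite_eq 0 1⟩
  have : ∀ᶠ n : ℕ in atTop, (0 : ℝ) = (n : ℝ) ^ α * (if n = 0 then (1:ℝ) else 0) := by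
    filter_upwards [eventually_ne_atTop 0] with n hn
    simp [hn]
  exact tendsto_const_nhds.congr' this

lemma w_tendsto_shift {α : ℝ} (hα : 1 < α) {g : ℕ → ℝ} {cg : ℝ}
    (hgt : Tendsto (fun n : ℕ => (n : ℝ) ^ α * g n) atTop (𝓝 cg)) (j : ℕ) :
    Tendsto (fun n : ℕ => (n : ℝ) ^ α * g (n - j)) atTop (𝓝 cg) := by
  have T2 : Tendsto (fun n : ℕ => ((n - j : ℕ) : ℝ) ^ α * g (n - j)) atTop (𝓝 cg) :=
    hgt.comp (tendsto_sub_atTop_nat j)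
  have T0 : Tendsto (fun n : ℕ => (n : ℝ) / ((n - j : ℕ) : ℝ)) atTop (𝓝 1) := by
    have h1 : Tendsto (fun m : ℕ => 1 + (j : ℝ) / (m : ℝ)) atTop (𝓝 1) := by
      simpa using tendsto_const_nhds.add (tendsto_const_div_atTop_nhds_zero_nat (j : ℝ))
    have h2 := h1.comp (tendsto_sub_atTop_nat j)
    refine h2.congr' ?_
    filter_upwards [eventually_ge_atTop (j + 1)] with n hn
    have hmn : n - j + j = n := by omega
    have hm : (0 : ℝ) < ((n - j : ℕ) : ℝ) := by
      have : 0 < n - j := by omega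
      exact_mod_cast this
    have hcast : (n : ℝ) = ((n - j : ℕ) : ℝ) + (j : ℝ) := by exact_mod_cast hmn.symm
    simp only [Function.comp_apply]
    rw [hcast]
    field_simp
  have hc : ContinuousAt (fun x : ℝ => x ^ α) 1 :=
    Real.continuousAt_rpow_const 1 α (Or.inl one_ne_zero)
  have T1 : Tendsto (fun n : ℕ => ((n : ℝ) / ((n - j : ℕ) : ℝ)) ^ α) atTop (𝓝 1) := by
    have h := hc.tendsto.comp T0
    simp only [Real.one_rpow] at h
    exact h
  have := T1.mul T2
  rw [one_mul] at this
  refine this.congr' ?_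
  filter_upwards [eventually_ge_atTop (j + 1)] with n hn
  have hm : (0 : ℝ) < ((n - j : ℕ) : ℝ) := by
    have : 0 < n - j := by omega
    exact_mod_cast this
  rw [Real.div_rpow (by positivity) hm.le]
  have hma : (0 : ℝ) < ((n - j : ℕ) : ℝ) ^ α := Real.rpow_pos_of_pos hm _
  field_simp

lemma half_tendsto {α : ℝ} (hα : 1 < α) {f g : ℕ → ℝ} {F cg : ℝ}
    (hf0 : ∀ n, 0 ≤ f n) (hfS : HasSum f F)
    (hg0 : ∀ n, 0 ≤ g n) (hgt : Tendsto (fun n : ℕ => (n : ℝ) ^ α * g n) atTop (𝓝 cg))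
    (P : ℕ → ℕ → Prop) [∀ n j, Decidable (P n j)]
    (hP1 : ∀ n j, P n j → 2 * j ≤ n) (hP2 : ∀ j, ∀ᶠ n in atTop, P n j) :
    Tendsto (fun n => ∑' j, if P n j then f j * ((n : ℝ) ^ α * g (n - j)) else 0)
      atTop (𝓝 (F * cg)) := by
  obtain ⟨Bg, hBg⟩ := hgt.bddAbove_range
  have hBg' : ∀ m : ℕ, (m : ℝ) ^ α * g m ≤ Bg := fun m => hBg ⟨m, rfl⟩
  have hBg0 : (0 : ℝ) ≤ Bg := by
    refine le_trans ?_ (hBg' 0)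
    simp [Real.zero_rpow (by positivity : α ≠ 0)]
  have h_sum : Summable (fun j => f j * ((2 : ℝ) ^ α * Bg)) :=
    hfS.summable.mul_right _
  have hab : ∀ j, Tendsto (fun n => if P n j then f j * ((n : ℝ) ^ α * g (n - j)) else 0)
      atTop (𝓝 (f j * cg)) := by
    intro j
    refine (tendsto_const_nhds.mul (w_tendsto_shift hα hgt j)).congr' ?_
    filter_upwards [hP2 j] with n hn
    rw [if_pos hn]
  have h_bound : ∀ᶠ n in atTop, ∀ j,
      ‖if P n j then f j * ((n : ℝ) ^ α * g (n - j)) else 0‖ ≤ f j * ((2 : ℝ) ^ α * Bg) := by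
    refine Eventually.of_forall fun n j => ?_
    by_cases h : P n j
    · rw [if_pos h]
      have h2 : 2 * j ≤ n := hP1 n j h
      have hterm0 : (0 : ℝ) ≤ f j * ((n : ℝ) ^ α * g (n - j)) := by
        have := hf0 j; have := hg0 (n - j); positivity
      rw [Real.norm_of_nonneg hterm0]
      refine mul_le_mul_of_nonneg_left ?_ (hf0 j)
      have hle : (n : ℝ) ≤ 2 * ((n - j : ℕ) : ℝ) := by
        have : n ≤ 2 * (n - j) := by omega
        exact_mod_cast this
      have hw : (n : ℝ) ^ α ≤ (2 : ℝ) ^ α * ((n - j : ℕ) : ℝ) ^ α := by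
        rw [← Real.mul_rpow (by norm_num) (by positivity)]
        exact Real.rpow_le_rpow (by positivity) hle (by linarith)
      calc (n : ℝ) ^ α * g (n - j) ≤ ((2 : ℝ) ^ α * ((n - j : ℕ) : ℝ) ^ α) * g (n - j) :=
            mul_le_mul_of_nonneg_right hw (hg0 _)
        _ = (2 : ℝ) ^ α * (((n - j : ℕ) : ℝ) ^ α * g (n - j)) := by ring
        _ ≤ (2 : ℝ) ^ α * Bg := by
            refine mul_le_mul_of_nonneg_left (hBg' _) (by positivity)
    · rw [if_neg h]
      simp only [norm_zero]
      have := hf0 j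
      positivity
  have := tendsto_tsum_of_dominated_convergence h_sum hab h_bound
  rwa [(hfS.mul_right cg).tsum_eq] at this

lemma conv_split {α : ℝ} (f g : ℕ → ℝ) (n : ℕ) :
    (n : ℝ) ^ α * ∑ p ∈ Finset.HasAntidiagonal.antidiagonal n, f p.1 * g p.2
      = (∑' j, if 2 * j ≤ n then f j * ((n : ℝ) ^ α * g (n - j)) else 0)
      + (∑' k, if 2 * k < n then g k * ((n : ℝ) ^ α * f (n - k)) else 0) := by
  rw [Finset.Nat.sum_antidiagonal_eq_sum_range_succ_mk, Finset.mul_sum]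
  rw [← Finset.sum_filter_add_sum_filter_not (Finset.range (n + 1)) (fun j => 2 * j ≤ n)]
  congr 1
  · rw [tsum_eq_sum (s := (Finset.range (n + 1)).filter (fun j => 2 * j ≤ n))
      (by intro j hj; rw [if_neg]; intro h
          exact hj (by simp only [mem_filter, mem_range]; exact ⟨by omega, h⟩))]
    refine Finset.sum_congr rfl fun j hj => ?_
    simp only [mem_filter, mem_range] at hj
    rw [if_pos hj.2]; ring
  · rw [tsum_eq_sum (s := (Finset.range (n + 1)).filter (fun k => 2 * k < n))
      (by intro k hk; rw [if_neg]; intro h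
          exact hk (by simp only [mem_filter, mem_range]; exact ⟨by omega, h⟩))]
    refine Finset.sum_nbij' (fun j => n - j) (fun k => n - k) ?_ ?_ ?_ ?_ ?_
    · intro j hj; simp only [mem_filter, mem_range] at hj ⊢; omega
    · intro k hk; simp only [mem_filter, mem_range] at hk ⊢; omega
    · intro j hj; simp only [mem_filter, mem_range] at hj; omega
    · intro k hk; simp only [mem_filter, mem_range] at hk; omega
    · intro j hj
      simp only [mem_filter, mem_range, not_le] at hj
      dsimp only
      rw [if_pos (by omega)]
      have h1 : n - (n - j) = j := by omega
      rw [h1]; ring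

lemma good_conv {α : ℝ} (hα : 1 < α) {f g : ℕ → ℝ} {cf F cg G : ℝ}
    (hf : Good α f cf F) (hg : Good α g cg G) :
    Good α (fun n => ∑ p ∈ Finset.HasAntidiagonal.antidiagonal n, f p.1 * g p.2)
      (cf * G + cg * F) (F * G) := by
  obtain ⟨hf0, hft, hfS⟩ := hf
  obtain ⟨hg0, hgt, hgS⟩ := hg
  have hnf : Summable (fun n => ‖f n‖) :=
    hfS.summable.congr fun n => (Real.norm_of_nonneg (hf0 n)).symm
  have hng : Summable (fun n => ‖g n‖) :=
    hgS.summable.congr fun n => (Real.norm_of_nonneg (hg0 n)).symm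
  refine ⟨?_, ?_, ?_⟩
  · intro n
    exact Finset.sum_nonneg fun p _ => mul_nonneg (hf0 _) (hg0 _)
  · have HA := half_tendsto hα hf0 hfS hg0 hgt (fun n j => 2 * j ≤ n)
      (fun n j h => h) (fun j => eventually_ge_atTop (2 * j))
    have HB := half_tendsto hα hg0 hgS hf0 hft (fun n k => 2 * k < n)
      (fun n k h => h.le) (fun k => eventually_gt_atTop (2 * k))
    have hval : cf * G + cg * F = F * cg + G * cf := by ring
    rw [hval]
    exact (HA.add HB).congr fun n => (conv_split f g n).symm
  · have hsum := summable_sum_mul_antidiagonal_of_summable_norm' hnf hfS.summable hng hgS.summable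
    have htsum := tsum_mul_tsum_eq_tsum_sum_antidiagonal_of_summable_norm hnf hng
    rw [hfS.tsum_eq, hgS.tsum_eq] at htsum
    exact hsum.hasSum_iff.2 htsum.symm

lemma good_base {α : ℝ} (hα : 1 < α) {r : ℝ} (h0 : 0 ≤ r) (h1 : r ≤ 1) :
    Good α (fun n => r ^ n / aZR α n) (if r = 1 then 1 else 0) (∑' j, r ^ j / aZR α j) := by
  have hsum : Summable (fun n => r ^ n / aZR α n) := by
    refine Summable.of_nonneg_of_le (fun n => by have := aZR_pos α n; positivity)
      (fun n => ?_) (summable_one_div_aZR hα)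
    have hr : r ^ n ≤ 1 := pow_le_one₀ h0 h1
    have := aZR_pos α n
    gcongr
  refine ⟨fun n => by have := aZR_pos α n; positivity, ?_, hsum.hasSum⟩
  have hev : (fun n : ℕ => r ^ n) =ᶠ[atTop]
      (fun n : ℕ => (n : ℝ) ^ α * (r ^ n / aZR α n)) := by
    filter_upwards [eventually_ne_atTop 0] with n hn
    have hw : aZR α n = (n : ℝ) ^ α := by simp [aZR, hn]
    have hn' : (0 : ℝ) < (n : ℝ) := by exact_mod_cast Nat.pos_of_ne_zero hn
    have hwpos : (0 : ℝ) < (n : ℝ) ^ α := Real.rpow_pos_of_pos hn' _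
    rw [hw]
    field_simp
  split_ifs with hr
  · subst hr
    refine (tendsto_const_nhds (x := (1:ℝ))).congr' ?_
    filter_upwards [hev] with n h
    rw [← h, one_pow]
  · have hrlt : r < 1 := lt_of_le_of_ne h1 hr
    exact (tendsto_pow_atTop_nhds_zero_of_lt_one h0 hrlt).congr' hev

lemma erase_univ_zero (k : ℕ) :
    (univ : Finset (Fin (k+1))).erase 0 = univ.image Fin.succ := by
  ext j
  simp only [mem_erase, mem_univ, and_true, mem_image, true_and, exists_true_left]
  constructor
  · intro h
    obtain ⟨i, rfl⟩ := Fin.exists_succ_eq.2 h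
    exact ⟨i, by simp⟩
  · rintro ⟨i, -, rfl⟩
    exact Fin.succ_ne_zero i

lemma erase_univ_succ (k : ℕ) (i : Fin k) :
    (univ : Finset (Fin (k+1))).erase i.succ
      = insert 0 ((univ.erase i).image Fin.succ) := by
  ext j
  simp only [mem_erase, mem_univ, and_true, mem_insert, mem_image, true_and]
  constructor
  · intro h
    rcases Fin.eq_zero_or_eq_succ j with rfl | ⟨i', rfl⟩
    · exact Or.inl rfl
    · right
      exact ⟨i', fun hi => h (by rw [hi]), rfl⟩
  · rintro (rfl | ⟨i', hi, rfl⟩)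
    · exact (Fin.succ_ne_zero i).symm
    · simpa [Fin.succ_inj] using hi

lemma sum_antidiagonalTuple_succ (k N : ℕ) (G : Fin (k+1) → ℕ → ℝ) :
    ∑ η ∈ Finset.Nat.antidiagonalTuple (k+1) N, ∏ i, G i (η i)
      = ∑ p ∈ Finset.HasAntidiagonal.antidiagonal N, G 0 p.1 *
          ∑ η ∈ Finset.Nat.antidiagonalTuple k p.2, ∏ i, G i.succ (η i) := by
  simp_rw [Finset.mul_sum]
  rw [Finset.sum_sigma']
  refine (Finset.sum_nbij' (fun z => Fin.cons z.1.1 z.2)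
    (fun η => ⟨(η 0, ∑ i, η (Fin.succ i)), Fin.tail η⟩) ?_ ?_ ?_ ?_ ?_).symm
  · rintro ⟨⟨p1, p2⟩, η⟩ hz
    simp only [mem_sigma, Finset.HasAntidiagonal.mem_antidiagonal, Finset.Nat.mem_antidiagonalTuple] at hz ⊢
    rw [Fin.sum_cons, hz.2, hz.1]
  · intro η hη
    simp only [Finset.Nat.mem_antidiagonalTuple] at hη
    simp only [mem_sigma, Finset.HasAntidiagonal.mem_antidiagonal, Finset.Nat.mem_antidiagonalTuple]
    refine ⟨?_, rfl⟩
    rw [← hη, Fin.sum_univ_succ]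
  · rintro ⟨⟨p1, p2⟩, η⟩ hz
    simp only [mem_sigma, Finset.HasAntidiagonal.mem_antidiagonal, Finset.Nat.mem_antidiagonalTuple] at hz
    simp only [Fin.cons_zero, Fin.cons_succ, Fin.tail_cons, hz.2]
  · intro η hη
    simp only
    exact Fin.cons_self_tail η
  · rintro ⟨⟨p1, p2⟩, η⟩ hz
    simp only
    rw [Fin.prod_univ_succ, Fin.cons_zero]
    simp [Fin.cons_succ]

lemma good_tuple {α : ℝ} (hα : 1 < α) : ∀ (k : ℕ) (G : Fin k → ℕ → ℝ) (c d : Fin k → ℝ),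
    (∀ i, Good α (G i) (c i) (d i)) →
    Good α (fun N => ∑ η ∈ Finset.Nat.antidiagonalTuple k N, ∏ i, G i (η i))
      (∑ i, c i * ∏ j ∈ univ.erase i, d j) (∏ i, d i) := by
  intro k
  induction k with
  | zero =>
    intro G c d _h
    have he : (fun N => ∑ η ∈ Finset.Nat.antidiagonalTuple 0 N, ∏ i, G i (η i))
        = fun n => if n = 0 then (1:ℝ) else 0 := by
      funext N
      cases N with
      | zero => simp
      | succ n => simp
    rw [he]
    simpa using good_delta hα
  | succ k ih =>
    intro G c d h
    have hrec := good_conv hα (h 0)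
      (ih (fun i => G i.succ) (fun i => c i.succ) (fun i => d i.succ) (fun i => h i.succ))
    have he : (fun N => ∑ η ∈ Finset.Nat.antidiagonalTuple (k+1) N, ∏ i, G i (η i))
        = fun n => ∑ p ∈ Finset.HasAntidiagonal.antidiagonal n, G 0 p.1 *
            ∑ η ∈ Finset.Nat.antidiagonalTuple k p.2, ∏ i, G i.succ (η i) := by
      funext N; exact sum_antidiagonalTuple_succ k N G
    rw [he]
    have hD : ∀ i : Fin k, ∏ j ∈ (univ : Finset (Fin (k+1))).erase i.succ, d j
        = d 0 * ∏ j ∈ univ.erase i, d j.succ := by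
      intro i
      rw [erase_univ_succ, Finset.prod_insert (by simp [Fin.succ_ne_zero]),
        Finset.prod_image (fun a _ b _ hab => Fin.succ_injective _ hab)]
    have h0D : ∏ j ∈ (univ : Finset (Fin (k+1))).erase 0, d j = ∏ i : Fin k, d i.succ := by
      rw [erase_univ_zero, Finset.prod_image (fun a _ b _ hab => Fin.succ_injective _ hab)]
    have hc1 : (∑ i : Fin (k+1), c i * ∏ j ∈ univ.erase i, d j)
        = c 0 * (∏ i : Fin k, d i.succ)
          + (∑ i : Fin k, c i.succ * ∏ j ∈ univ.erase i, d j.succ) * d 0 := by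
      rw [Fin.sum_univ_succ, h0D, Finset.sum_mul]
      congr 1
      refine Finset.sum_congr rfl fun i _ => ?_
      rw [hD i]; ring
    have hc2 : (∏ i : Fin (k+1), d i) = d 0 * ∏ i : Fin k, d i.succ :=
      Fin.prod_univ_succ d
    rw [hc1, hc2]
    exact hrec

lemma mem_confs {S : Type*} [Fintype S] [DecidableEq S] {N : ℕ} {η : S → ℕ} :
    η ∈ confs S N ↔ ∑ x, η x = N := by
  simp only [confs, mem_filter, Fintype.mem_piFinset, mem_range]
  constructor
  · exact fun h => h.2
  · intro h
    refine ⟨fun x => ?_, h⟩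
    have : η x ≤ N := h ▸ Finset.single_le_sum (fun y _ => Nat.zero_le _) (mem_univ x)
    omega

lemma sum_confs_eq {S : Type*} [Fintype S] [DecidableEq S] {k : ℕ} (e : S ≃ Fin k)
    (F : S → ℕ → ℝ) (N : ℕ) :
    ∑ η ∈ confs S N, ∏ x, F x (η x)
      = ∑ ζ ∈ Finset.Nat.antidiagonalTuple k N, ∏ i, F (e.symm i) (ζ i) := by
  refine Finset.sum_nbij' (fun η => η ∘ e.symm) (fun ζ => ζ ∘ e) ?_ ?_ ?_ ?_ ?_
  · intro η hη
    rw [mem_confs] at hη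
    rw [Finset.Nat.mem_antidiagonalTuple, ← hη]
    exact Equiv.sum_comp e.symm η
  · intro ζ hζ
    rw [Finset.Nat.mem_antidiagonalTuple] at hζ
    rw [mem_confs, ← hζ]
    exact Equiv.sum_comp e ζ
  · intro η _; funext x; simp
  · intro ζ _; funext i; simp
  · intro η _
    exact (Equiv.prod_comp e.symm (fun x => F x (η x))).symm

lemma prod_erase_equiv {S : Type*} [Fintype S] [DecidableEq S] {k : ℕ} (e : S ≃ Fin k)
    (f : S → ℝ) (i : Fin k) :
    ∏ j ∈ (univ : Finset (Fin k)).erase i, f (e.symm j)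
      = ∏ y ∈ (univ : Finset S).erase (e.symm i), f y := by
  refine Finset.prod_nbij' (fun j => e.symm j) (fun y => e y) ?_ ?_ ?_ ?_ ?_
  · intro j hj
    simp only [mem_erase, mem_univ, and_true] at hj ⊢
    exact fun h => hj (e.symm.injective h)
  · intro y hy
    simp only [mem_erase, mem_univ, and_true] at hy ⊢
    intro h
    exact hy (by rw [← e.symm_apply_apply y, h])
  · intro j _; simp
  · intro y _; simp
  · intro j _; rfl

theorem partition_function_limit (S : Type*) [Fintype S] [DecidableEq S]
    (hκ : 2 ≤ Fintype.card S) (α : ℝ) (hα : 1 < α)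
    (m : S → ℝ) (hm : ∀ x, 0 < m x) (hm1 : ∑ x, m x = 1)
    (Mstar : ℝ) (hMstar : IsGreatest (Set.range m) Mstar)
    (Sstar : Finset S) (hSstar : Sstar = Finset.univ.filter (fun x => m x = Mstar))
    (κstar : ℕ) (hκstar : κstar = Sstar.card)
    (mstar : S → ℝ) (hmstar : ∀ x, mstar x = m x / Mstar)
    (Γ : S → ℝ) (hΓ : ∀ y, Γ y = ∑' j : ℕ, mstar y ^ j / aZR α j)
    (Γα : ℝ) (hΓα : Γα = ∑' j : ℕ, 1 / aZR α j)
    (Z : ℕ → ℝ)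
    (hZ : ∀ N, Z N = (N : ℝ) ^ α *
      ∑ η ∈ confs S N, ∏ x, mstar x ^ η x / aZR α (η x)) :
    Filter.Tendsto Z Filter.atTop
      (nhds ((κstar : ℝ) * Γα ^ (κstar - 1) * ∏ y ∈ Finset.univ \ Sstar, Γ y)) := by
  classical
  obtain ⟨⟨x₀, hx₀⟩, hub⟩ := hMstar
  have hM0 : 0 < Mstar := hx₀ ▸ hm x₀
  have hms0 : ∀ x, 0 ≤ mstar x := fun x => by
    rw [hmstar]; have := (hm x).le; positivity
  have hms1 : ∀ x, mstar x ≤ 1 := fun x => by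
    rw [hmstar]; exact (div_le_one hM0).2 (hub ⟨x, rfl⟩)
  have hmem : ∀ x, (mstar x = 1) ↔ x ∈ Sstar := fun x => by
    rw [hmstar, hSstar, mem_filter, div_eq_one_iff_eq hM0.ne']
    simp
  have hgood : ∀ x : S, Good α (fun n => mstar x ^ n / aZR α n)
      (if x ∈ Sstar then 1 else 0) (Γ x) := by
    intro x
    have h := good_base hα (hms0 x) (hms1 x)
    have h2 : (if mstar x = 1 then (1:ℝ) else 0) = (if x ∈ Sstar then 1 else 0) := by
      simp only [hmem x]
    rw [h2, ← hΓ x] at h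
    exact h
  set k := Fintype.card S with hk
  set e := Fintype.equivFin S with he
  have hT := good_tuple hα k (fun i n => mstar (e.symm i) ^ n / aZR α n)
    (fun i => if e.symm i ∈ Sstar then 1 else 0) (fun i => Γ (e.symm i))
    (fun i => hgood (e.symm i))
  have htend := hT.2.1
  have hZeq : ∀ N : ℕ, Z N = (N : ℝ) ^ α *
      ∑ η ∈ Finset.Nat.antidiagonalTuple k N, ∏ i, mstar (e.symm i) ^ η i / aZR α (η i) := by
    intro N
    rw [hZ N, sum_confs_eq e (fun x n => mstar x ^ n / aZR α n) N]
  have hC : (∑ i : Fin k, (if e.symm i ∈ Sstar then (1:ℝ) else 0)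
        * ∏ j ∈ univ.erase i, Γ (e.symm j))
      = (κstar : ℝ) * Γα ^ (κstar - 1) * ∏ y ∈ Finset.univ \ Sstar, Γ y := by
    have step1 : ∀ i : Fin k, ∏ j ∈ univ.erase i, Γ (e.symm j)
        = ∏ y ∈ univ.erase (e.symm i), Γ y := fun i => prod_erase_equiv e Γ i
    simp_rw [step1]
    rw [Equiv.sum_comp e.symm
      (fun x => (if x ∈ Sstar then (1:ℝ) else 0) * ∏ y ∈ univ.erase x, Γ y)]
    simp_rw [ite_mul, one_mul, zero_mul]
    rw [Finset.sum_ite_mem, Finset.univ_inter]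
    have hΓS : ∀ y ∈ Sstar, Γ y = Γα := by
      intro y hy
      rw [hΓ y, hΓα]
      have : mstar y = 1 := (hmem y).2 hy
      simp [this]
    have hper : ∀ x ∈ Sstar, (∏ y ∈ univ.erase x, Γ y)
        = Γα ^ (κstar - 1) * ∏ y ∈ Finset.univ \ Sstar, Γ y := by
      intro x hx
      rw [← Finset.prod_filter_mul_prod_filter_not (univ.erase x) (· ∈ Sstar)]
      have hx1 : (univ.erase x).filter (· ∈ Sstar) = Sstar.erase x := by
        ext y
        simp only [mem_filter, mem_erase, mem_univ, and_true, true_and]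
      have hx2 : (univ.erase x).filter (fun y => ¬ y ∈ Sstar) = univ \ Sstar := by
        ext y
        simp only [mem_filter, mem_erase, mem_univ, and_true, true_and, mem_sdiff]
        constructor
        · rintro ⟨-, h⟩; exact Finset.mem_sdiff.2 ⟨mem_univ _, h⟩
        · intro h; exact ⟨fun hyx => (Finset.mem_sdiff.1 h).2 (hyx ▸ hx), (Finset.mem_sdiff.1 h).2⟩
      rw [hx1, hx2]
      congr 1
      rw [Finset.prod_congr rfl (fun y hy => hΓS y (Finset.mem_of_mem_erase hy)),
        Finset.prod_const, Finset.card_erase_of_mem hx, hκstar]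
    rw [Finset.sum_congr rfl hper, Finset.sum_const, nsmul_eq_mul, ← hκstar]
    ring
  rw [← hC]
  exact htend.congr fun N => (hZeq N).symm
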